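/- Let k be a field of characteristic zero, X a finite type equipped with a fixed-point-free involution c : X → X, and Σ a subset of X such that Σ and c(Σ) are disjoint with union X. Fix a linear order on X, let V be the k-vector space with basis (e_x)_{x∈X}, and work in Λ(V), writing e_S for the ordered wedge product over a subset S ⊆ X. Set L_σ = e_σ ∧ e_{cσ} for σ ∈ Σ, L_K = ∏_{σ∈K} L_σ for K ⊆ Σ, and L = ∑_{σ∈Σ} L_σ. Then for all I ⊆ Σ, J ⊆ c(Σ) and every natural number m: L^m ∧ e_{I∪J} = m! · ∑_K L_K ∧ e_{I∪J}, where K runs over all subsets of Σ of cardinality m satisfying K ∩ I = ∅ and c(K) ∩ J = ∅. -/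

import Mathlib

/-- The basis vector `e_x` of `V = X → k` inside the exterior algebra `Λ(V)`. -/
noncomputable def eVec (k : Type*) {X : Type*} [Field k] [DecidableEq X] (x : X) :
    ExteriorAlgebra k (X → k) :=
  ExteriorAlgebra.ι k (Pi.single x 1)

/-- The ordered wedge product `e_S = ⋀_{x ∈ S} e_x` over a finite subset `S ⊆ X`,
taken in the fixed linear order on `X`. -/
noncomputable def eWedge (k : Type*) {X : Type*} [Field k] [LinearOrder X] (S : Finset X) :
    ExteriorAlgebra k (X → k) :=
  ((S.sort (· ≤ ·)).map (eVec k)).prod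

/-- The isotypic component `L_σ = e_σ ∧ e_{cσ}` of the Lefschetz class. -/
noncomputable def Lsigma (k : Type*) {X : Type*} [Field k] [DecidableEq X] (c : X → X) (σ : X) :
    ExteriorAlgebra k (X → k) :=
  eVec k σ * eVec k (c σ)

/-- The product `L_K = ∏_{σ ∈ K} L_σ` (the factors `L_σ` have even degree, hence commute,
so the ordered product represents the product). -/
noncomputable def LK (k : Type*) {X : Type*} [Field k] [LinearOrder X] (c : X → X)
    (K : Finset X) : ExteriorAlgebra k (X → k) :=
  ((K.sort (· ≤ ·)).map (Lsigma k c)).prod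

/-- The Lefschetz class `L = ∑_{σ ∈ Σ} L_σ = ∑_{σ ∈ Σ} e_σ ∧ e_{cσ}`. -/
noncomputable def Lef (k : Type*) {X : Type*} [Field k] [DecidableEq X] (c : X → X)
    (S : Finset X) : ExteriorAlgebra k (X → k) :=
  ∑ σ ∈ S, Lsigma k c σ

/-! ### Auxiliary machinery -/

/-- Product of basis vectors indexed by a list. -/
noncomputable def FF (k : Type*) {X : Type*} [Field k] [DecidableEq X] (l : List X) :
    ExteriorAlgebra k (X → k) := (l.map (eVec k)).prod

section deceq
variable {k X : Type*} [Field k] [DecidableEq X]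

lemma FF_cons (a : X) (t : List X) : FF k (a :: t) = eVec k a * FF k t := by
  simp [FF]

lemma eVec_anticomm (x y : X) : eVec k x * eVec k y = -(eVec k y * eVec k x) :=
  eq_neg_of_add_eq_zero_left (ExteriorAlgebra.ι_add_mul_swap _ _)

lemma eVec_sq (x : X) : eVec k x * eVec k x = 0 := ExteriorAlgebra.ι_sq_zero _

lemma eVec_mul_FF_of_mem {x : X} {l : List X} (h : x ∈ l) : eVec k x * FF k l = 0 := by
  induction l with
  | nil => simp at h
  | cons a t ih =>
    rw [FF_cons, ← mul_assoc]
    rcases List.mem_cons.1 h with rfl | h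
    · rw [eVec_sq, zero_mul]
    · rw [eVec_anticomm, neg_mul, mul_assoc, ih h, mul_zero, neg_zero]

lemma FF_of_not_nodup {l : List X} (h : ¬ l.Nodup) : FF k l = 0 := by
  induction l with
  | nil => simp at h
  | cons a t ih =>
    rw [List.nodup_cons, not_and_or, not_not] at h
    rw [FF_cons]
    rcases h with h | h
    · exact eVec_mul_FF_of_mem h
    · rw [ih h, mul_zero]

lemma Lsigma_commute_eVec (c : X → X) (σ x : X) : Commute (Lsigma k c σ) (eVec k x) := by
  show _ = _
  rw [Lsigma, mul_assoc, eVec_anticomm (c σ) x, mul_neg, ← mul_assoc,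
    eVec_anticomm σ x, neg_mul, neg_neg, mul_assoc]

lemma Lsigma_commute_FF (c : X → X) (σ : X) (l : List X) : Commute (Lsigma k c σ) (FF k l) := by
  induction l with
  | nil => simpa [FF] using Commute.one_right _
  | cons a t ih => rw [FF_cons]; exact (Lsigma_commute_eVec c σ a).mul_right ih

lemma Lsigma_commute (c : X → X) (σ τ : X) : Commute (Lsigma k c σ) (Lsigma k c τ) := by
  have := Lsigma_commute_FF (k := k) c σ [τ, c τ]
  simpa [FF, Lsigma, mul_assoc] using this

lemma Lsigma_sq (c : X → X) (σ : X) : Lsigma k c σ * Lsigma k c σ = 0 := by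
  have h : Lsigma k c σ * Lsigma k c σ = FF k [σ, c σ, σ, c σ] := by
    simp [FF, Lsigma, mul_assoc]
  rw [h]
  exact FF_of_not_nodup (by simp)

end deceq

section lin
variable {k X : Type*} [Field k] [LinearOrder X]

lemma LK_insert (c : X → X) {σ : X} {K : Finset X} (h : σ ∉ K) :
    LK k c (insert σ K) = Lsigma k c σ * LK k c K := by
  have hperm : List.Perm ((insert σ K).sort (· ≤ ·)) (σ :: K.sort (· ≤ ·)) :=
    ((Finset.sort_perm_toList _ _).trans (Finset.toList_insert h)).trans
      (List.Perm.cons _ (Finset.sort_perm_toList _ _).symm)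
  have hpw : (((insert σ K).sort (· ≤ ·)).map (Lsigma k c)).Pairwise Commute :=
    List.pairwise_map.2 ((Finset.pairwise_sort _ (· ≤ ·)).imp fun _ => Lsigma_commute c _ _)
  rw [LK, (hperm.map (Lsigma k c)).prod_eq' hpw, List.map_cons, List.prod_cons, LK]

lemma LK_erase (c : X → X) {σ : X} {K : Finset X} (h : σ ∈ K) :
    LK k c K = Lsigma k c σ * LK k c (K.erase σ) := by
  conv_lhs => rw [← Finset.insert_erase h]
  exact LK_insert c (Finset.notMem_erase _ _)

lemma LK_eq_FF (c : X → X) (K : Finset X) :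
    LK k c K = FF k ((K.sort (· ≤ ·)).flatMap fun σ => [σ, c σ]) := by
  rw [LK]
  induction K.sort (· ≤ ·) with
  | nil => rfl
  | cons a t ih =>
    rw [List.map_cons, List.prod_cons, ih, List.flatMap_cons]
    show _ = FF k ([a, c a] ++ _)
    rw [show FF k ([a, c a] ++ (t.flatMap fun σ => [σ, c σ]))
        = FF k [a, c a] * FF k (t.flatMap fun σ => [σ, c σ]) from by simp [FF, mul_assoc]]
    congr 1
    simp [FF, Lsigma, mul_assoc]

lemma LK_mul_eWedge_eq_zero (c : X → X) {K T : Finset X} {x : X}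
    (hx : x ∈ (K.sort (· ≤ ·)).flatMap fun σ => [σ, c σ]) (hx2 : x ∈ T) :
    LK k c K * eWedge k T = 0 := by
  rw [LK_eq_FF, show eWedge k T = FF k (T.sort (· ≤ ·)) from rfl,
    show FF k ((K.sort (· ≤ ·)).flatMap fun σ => [σ, c σ]) * FF k (T.sort (· ≤ ·))
      = FF k (((K.sort (· ≤ ·)).flatMap fun σ => [σ, c σ]) ++ T.sort (· ≤ ·)) from by
        simp [FF]]
  apply FF_of_not_nodup
  intro hn
  exact (List.disjoint_of_nodup_append hn) hx ((Finset.mem_sort _).2 hx2)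

end lin

lemma key_sum {X : Type*} [DecidableEq X] {A : Type*} [AddCommMonoid A]
    (S : Finset X) (m : ℕ) (f : Finset X → A) :
    ∑ σ ∈ S, ∑ K ∈ (S.powersetCard m).filter (fun K => σ ∉ K), f (insert σ K)
      = ∑ K ∈ S.powersetCard (m + 1), K.card • f K := by
  have hR : ∀ K ∈ S.powersetCard (m + 1), K.card • f K = ∑ _σ ∈ K, f K :=
    fun K _ => (Finset.sum_const _).symm
  rw [Finset.sum_congr rfl hR, Finset.sum_sigma' S _ (fun σ K => f (insert σ K)),
    Finset.sum_sigma' (S.powersetCard (m + 1)) _ (fun K _ => f K)]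
  refine Finset.sum_nbij' (fun p => ⟨insert p.1 p.2, p.1⟩) (fun q => ⟨q.2, q.1.erase q.2⟩)
    ?_ ?_ ?_ ?_ ?_
  · rintro ⟨σ, K⟩ hp
    simp only [Finset.mem_sigma, Finset.mem_filter, Finset.mem_powersetCard] at hp ⊢
    obtain ⟨hσ, ⟨hKS, hKc⟩, hσK⟩ := hp
    exact ⟨⟨Finset.insert_subset hσ hKS, by rw [Finset.card_insert_of_notMem hσK, hKc]⟩,
      Finset.mem_insert_self _ _⟩
  · rintro ⟨K, σ⟩ hq
    simp only [Finset.mem_sigma, Finset.mem_filter, Finset.mem_powersetCard] at hq ⊢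
    obtain ⟨⟨hKS, hKc⟩, hσK⟩ := hq
    refine ⟨hKS hσK, ⟨(Finset.erase_subset _ _).trans hKS, ?_⟩, Finset.notMem_erase _ _⟩
    rw [Finset.card_erase_of_mem hσK, hKc]
    omega
  · rintro ⟨σ, K⟩ hp
    simp only [Finset.mem_sigma, Finset.mem_filter] at hp
    simp [Finset.erase_insert hp.2.2]
  · rintro ⟨K, σ⟩ hq
    simp only [Finset.mem_sigma] at hq
    simp [Finset.insert_erase hq.2]
  · rintro ⟨σ, K⟩ hp
    simp only [Finset.mem_sigma, Finset.mem_filter] at hp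
    rfl

lemma Lef_pow {k X : Type*} [Field k] [LinearOrder X] (c : X → X) (S : Finset X) (m : ℕ) :
    Lef k c S ^ m = m.factorial • ∑ K ∈ S.powersetCard m, LK k c K := by
  induction m with
  | zero =>
    simp only [pow_zero, Finset.powersetCard_zero, Finset.sum_singleton, Nat.factorial_zero,
      one_smul]
    rw [LK, Finset.sort_empty]
    rfl
  | succ n ih =>
    rw [pow_succ', ih, mul_smul_comm, Lef, Finset.sum_mul]
    have hstep : ∀ σ ∈ S,
        Lsigma k c σ * ∑ K ∈ S.powersetCard n, LK k c K
          = ∑ K ∈ (S.powersetCard n).filter (fun K => σ ∉ K), LK k c (insert σ K) := by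
      intro σ _
      rw [Finset.mul_sum]
      rw [← Finset.sum_filter_add_sum_filter_not (S.powersetCard n) (fun K => σ ∉ K)
        (fun K => Lsigma k c σ * LK k c K)]
      have h0 : ∑ K ∈ (S.powersetCard n).filter (fun K => ¬ σ ∉ K),
          Lsigma k c σ * LK k c K = 0 := by
        apply Finset.sum_eq_zero
        intro K hK
        rw [Finset.mem_filter, not_not] at hK
        rw [LK_erase c hK.2, ← mul_assoc, Lsigma_sq, zero_mul]
      rw [h0, add_zero]
      exact Finset.sum_congr rfl fun K hK => by
        rw [Finset.mem_filter] at hK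
        rw [LK_insert c hK.2]
    rw [Finset.sum_congr rfl hstep, key_sum S n (LK k c)]
    have hcard : ∀ K ∈ S.powersetCard (n + 1), K.card • LK k c K = (n + 1) • LK k c K := by
      intro K hK
      rw [(Finset.mem_powersetCard.1 hK).2]
    rw [Finset.sum_congr rfl hcard, ← Finset.smul_sum, smul_smul, Nat.factorial_succ,
      Nat.mul_comm]

/-- Equation (2.3) of the paper, in the exterior-algebra model of the cohomology of a
`g`-dimensional abelian variety with CM type `Σ` (the finset `S`, with fixed-point-free
involution `c`): for `I ⊆ Σ`, `J ⊆ cΣ` and every `m`,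
`L^m ∧ e_{I∪J} = m! · ∑_K L_K ∧ e_{I∪J}`, the sum over all `K ⊆ Σ` with `|K| = m`,
`K ∩ I = ∅` and `c(K) ∩ J = ∅`. -/
theorem stmt4 (k X : Type*) [Field k] [CharZero k] [Fintype X] [LinearOrder X]
    (c : X → X) (hinv : Function.Involutive c) (hfree : ∀ x : X, c x ≠ x)
    (S : Finset X) (hdisj : Disjoint S (S.image c)) (hcover : S ∪ S.image c = Finset.univ)
    (I J : Finset X) (hI : I ⊆ S) (hJ : J ⊆ S.image c) (m : ℕ) :
    Lef k c S ^ m * eWedge k (I ∪ J) =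
      m.factorial •
        ∑ K ∈ (S.powersetCard m).filter (fun K => K ∩ I = ∅ ∧ K.image c ∩ J = ∅),
          LK k c K * eWedge k (I ∪ J) := by
  rw [Lef_pow, smul_mul_assoc, Finset.sum_mul]
  congr 1
  refine (Finset.sum_filter_of_ne fun K hK hne => ?_).symm
  by_contra hp
  apply hne
  rw [not_and_or] at hp
  rcases hp with hp | hp
  · obtain ⟨σ, hσ⟩ := Finset.nonempty_iff_ne_empty.2 hp
    rw [Finset.mem_inter] at hσ
    exact LK_mul_eWedge_eq_zero c
      (List.mem_flatMap.2 ⟨σ, (Finset.mem_sort _).2 hσ.1, by simp⟩)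
      (Finset.mem_union_left _ hσ.2)
  · obtain ⟨y, hy⟩ := Finset.nonempty_iff_ne_empty.2 hp
    rw [Finset.mem_inter] at hy
    obtain ⟨σ, hσK, rfl⟩ := Finset.mem_image.1 hy.1
    exact LK_mul_eWedge_eq_zero c
      (List.mem_flatMap.2 ⟨σ, (Finset.mem_sort _).2 hσK, by simp⟩)
      (Finset.mem_union_right _ hy.2)
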